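/- For all integers m ≥ 1 and n ≥ 1, det D″_{m,n} = ∏_{h=1}^{m} ∏_{k=1}^{n} (4·cos²((2h−1)π/(4m)) + 4·cos²((2k−1)π/(4n))). -/

import Mathlib

open Real

/-- The `n × n` matrix `A′_n`: all diagonal entries `4`, entry `-1` at every position
`(h,k)` with `|h-k| = 1` except at position `(n, n-1)` (the last row, next-to-last
column), where the entry is `-2`, and `0` elsewhere. -/
def matA' (n : ℕ) : Matrix (Fin n) (Fin n) ℝ :=
  Matrix.of fun h k =>
    if h = k then 4
    else if (h : ℕ) = n - 1 ∧ (k : ℕ) + 2 = n then -2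
    else if |(h : ℤ) - (k : ℤ)| = 1 then -1 else 0

/-- The `mn × mn` block-tridiagonal matrix `D″_{m,n}`: every diagonal block is `A′_n`;
the blocks immediately above the diagonal are `-I_n`; the blocks immediately below the
diagonal are `-I_n` except the one in the last block-row, which is `-2·I_n`; all other
blocks are zero.  (For `m = 1` this is just `A′_n`.) -/
def matD'' (m n : ℕ) : Matrix (Fin m × Fin n) (Fin m × Fin n) ℝ :=
  Matrix.of fun p q =>
    if p.1 = q.1 then matA' n p.2 q.2
    else if (p.1 : ℕ) = (q.1 : ℕ) + 1 then
      (if (p.1 : ℕ) = m - 1 then (-2 : ℝ) • (1 : Matrix (Fin n) (Fin n) ℝ)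
       else -(1 : Matrix (Fin n) (Fin n) ℝ)) p.2 q.2
    else if (q.1 : ℕ) = (p.1 : ℕ) + 1 then
      (-(1 : Matrix (Fin n) (Fin n) ℝ)) p.2 q.2
    else 0

open Kronecker

def tM (m : ℕ) : Matrix (Fin m) (Fin m) ℝ :=
  Matrix.of fun j l =>
    (if (l : ℕ) = (j : ℕ) + 1 then (-1 : ℝ) else 0) +
    (if (j : ℕ) = (l : ℕ) + 1 then (-1 : ℝ) else 0) +
    (if (j : ℕ) = m - 1 ∧ (l : ℕ) + 2 = m then (-1 : ℝ) else 0)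

noncomputable def ang (m : ℕ) (h : Fin m) : ℝ := (2 * (h : ℕ) + 1) * π / (2 * m)

lemma sum_ite_nat_eq {m : ℕ} (c : ℕ) (f : Fin m → ℝ) :
    (∑ l : Fin m, if (l : ℕ) = c then f l else 0) = if h : c < m then f ⟨c, h⟩ else 0 := by
  split_ifs with h
  · rw [Finset.sum_eq_single (⟨c, h⟩ : Fin m)]
    · simp
    · intro b _ hb
      rw [if_neg]
      exact fun hc => hb (Fin.ext hc)
    · simp
  · apply Finset.sum_eq_zero
    intro l _
    rw [if_neg]
    omega

lemma cos_m_ang (m : ℕ) (h : Fin m) (hm : 1 ≤ m) : cos ((m : ℝ) * ang m h) = 0 := by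
  have hm0 : (m : ℝ) ≠ 0 := by positivity
  have : (m : ℝ) * ang m h = (h : ℕ) * π + π / 2 := by
    unfold ang; field_simp
  rw [this, cos_add, cos_pi_div_two, sin_pi_div_two, mul_zero, zero_sub, neg_eq_zero,
    mul_one, sin_nat_mul_pi]

lemma tM_mulVec (m : ℕ) (hm : 1 ≤ m) (h : Fin m) :
    (tM m).mulVec (fun j : Fin m => sin (((j : ℕ) + 1) * ang m h)) =
      (-2 * cos (ang m h)) • fun j : Fin m => sin (((j : ℕ) + 1) * ang m h) := by
  set θ := ang m h with hθ
  have hrec : ∀ t : ℕ, sin (((t : ℝ) + 2) * θ) + sin (t * θ) = 2 * cos θ * sin ((t + 1) * θ) := by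
    intro t
    have h1 : ((t : ℝ) + 2) * θ = (t + 1) * θ + θ := by ring
    have h2 : (t : ℝ) * θ = (t + 1) * θ - θ := by ring
    rw [h1, h2, sin_add, sin_sub]; ring
  have hcos : cos ((m : ℝ) * θ) = 0 := cos_m_ang m h hm
  funext j
  rw [Matrix.mulVec, dotProduct]
  have expand : (∑ l : Fin m, tM m j l * sin (((l : ℕ) + 1) * θ)) =
      (∑ l : Fin m, (if (l : ℕ) = (j : ℕ) + 1 then (-1 : ℝ) else 0) * sin (((l : ℕ) + 1) * θ)) +
      (∑ l : Fin m, (if (j : ℕ) = (l : ℕ) + 1 then (-1 : ℝ) else 0) * sin (((l : ℕ) + 1) * θ)) +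
      (∑ l : Fin m, (if (j : ℕ) = m - 1 ∧ (l : ℕ) + 2 = m then (-1 : ℝ) else 0) *
        sin (((l : ℕ) + 1) * θ)) := by
    rw [← Finset.sum_add_distrib, ← Finset.sum_add_distrib]
    exact Finset.sum_congr rfl fun l _ => by simp only [tM, Matrix.of_apply]; ring
  rw [expand]
  have e1 : (∑ l : Fin m, (if (l : ℕ) = (j : ℕ) + 1 then (-1 : ℝ) else 0) *
      sin (((l : ℕ) + 1) * θ)) =
      if (j : ℕ) + 1 < m then -sin (((j : ℕ) + 2) * θ) else 0 := by
    calc (∑ l : Fin m, (if (l : ℕ) = (j : ℕ) + 1 then (-1 : ℝ) else 0) *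
        sin (((l : ℕ) + 1) * θ))
        = ∑ l : Fin m, (if (l : ℕ) = (j : ℕ) + 1 then -sin (((l : ℕ) + 1) * θ) else 0) :=
          Finset.sum_congr rfl (fun l _ => by split_ifs <;> ring)
      _ = _ := by
          rw [sum_ite_nat_eq]
          split_ifs with hc
          · simp only [Fin.val_mk]; push_cast; ring_nf
          · rfl
  have e2 : (∑ l : Fin m, (if (j : ℕ) = (l : ℕ) + 1 then (-1 : ℝ) else 0) *
      sin (((l : ℕ) + 1) * θ)) =
      if 1 ≤ (j : ℕ) then -sin ((j : ℕ) * θ) else 0 := by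
    calc (∑ l : Fin m, (if (j : ℕ) = (l : ℕ) + 1 then (-1 : ℝ) else 0) *
        sin (((l : ℕ) + 1) * θ))
        = ∑ l : Fin m, (if (l : ℕ) = (j : ℕ) - 1 ∧ 1 ≤ (j : ℕ) then
            -sin (((l : ℕ) + 1) * θ) else 0) := by
          refine Finset.sum_congr rfl (fun l _ => ?_)
          by_cases hc : (j : ℕ) = (l : ℕ) + 1
          · rw [if_pos hc, if_pos (by omega)]; ring
          · rw [if_neg hc, if_neg (by omega), zero_mul]
      _ = _ := by
          by_cases hj : 1 ≤ (j : ℕ)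
          · simp only [hj, and_true, if_true]
            rw [sum_ite_nat_eq ((j : ℕ) - 1) (fun l : Fin m => -sin (((l : ℕ) + 1) * θ)),
              dif_pos (by omega)]
            simp only [Fin.val_mk]
            rw [Nat.cast_sub hj]
            push_cast; ring_nf
          · simp only [hj, and_false, if_false, Finset.sum_const_zero]
  have e3 : (∑ l : Fin m, (if (j : ℕ) = m - 1 ∧ (l : ℕ) + 2 = m then (-1 : ℝ) else 0) *
      sin (((l : ℕ) + 1) * θ)) =
      if (j : ℕ) = m - 1 ∧ 2 ≤ m then -sin (((m : ℝ) - 1) * θ) else 0 := by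
    calc (∑ l : Fin m, (if (j : ℕ) = m - 1 ∧ (l : ℕ) + 2 = m then (-1 : ℝ) else 0) *
        sin (((l : ℕ) + 1) * θ))
        = ∑ l : Fin m, (if (l : ℕ) = m - 2 ∧ ((j : ℕ) = m - 1 ∧ 2 ≤ m) then
            -sin (((l : ℕ) + 1) * θ) else 0) := by
          refine Finset.sum_congr rfl (fun l _ => ?_)
          by_cases hc : (j : ℕ) = m - 1 ∧ (l : ℕ) + 2 = m
          · rw [if_pos hc, if_pos (by omega)]; ring
          · rw [if_neg hc, if_neg (by omega), zero_mul]
      _ = _ := by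
          by_cases hj : (j : ℕ) = m - 1 ∧ 2 ≤ m
          · simp only [hj, and_true, if_true, and_self]
            rw [sum_ite_nat_eq (m - 2) (fun l : Fin m => -sin (((l : ℕ) + 1) * θ)),
              dif_pos (by omega)]
            simp only [Fin.val_mk]
            rw [Nat.cast_sub (by omega : 2 ≤ m)]
            push_cast; ring_nf
          · simp only [hj, and_false, if_false, Finset.sum_const_zero]
  rw [e1, e2, e3]
  have hmθ : sin (((m : ℝ) - 1) * θ) = cos θ * sin ((m : ℝ) * θ) := by
    have hx : ((m : ℝ) - 1) * θ = (m : ℝ) * θ - θ := by ring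
    rw [hx, sin_sub, hcos]; ring
  simp only [Pi.smul_apply, smul_eq_mul]
  by_cases hlast : (j : ℕ) = m - 1
  · by_cases hm2 : 2 ≤ m
    · rw [if_neg (show ¬((j : ℕ) + 1 < m) by omega),
        if_pos (show 1 ≤ (j : ℕ) by omega), if_pos ⟨hlast, hm2⟩]
      have hc1 : ((j : ℕ) : ℝ) = (m : ℝ) - 1 := by
        have hx : (j : ℕ) + 1 = m := by omega
        have := congrArg (Nat.cast : ℕ → ℝ) hx
        push_cast at this; linarith
      rw [hc1, hmθ]
      have hx : (m : ℝ) - 1 + 1 = (m : ℝ) := by ring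
      rw [hx]
      ring
    · have hm1 : m = 1 := by omega
      have hj0 : (j : ℕ) = 0 := by omega
      rw [if_neg (show ¬((j : ℕ) + 1 < m) by omega),
        if_neg (show ¬(1 ≤ (j : ℕ)) by omega),
        if_neg (show ¬((j : ℕ) = m - 1 ∧ 2 ≤ m) by omega)]
      have hc0 : cos θ = 0 := by
        have := hcos
        rw [hm1] at this
        norm_num at this
        exact this
      rw [hc0]; ring
  · have hjm : (j : ℕ) + 1 < m := by omega
    rw [if_pos hjm, if_neg (show ¬((j : ℕ) = m - 1 ∧ 2 ≤ m) by omega)]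
    by_cases hj0 : (j : ℕ) = 0
    · rw [if_neg (show ¬(1 ≤ (j : ℕ)) by omega), hj0]
      have := hrec 0
      norm_num at this ⊢
      linarith
    · rw [if_pos (show 1 ≤ (j : ℕ) by omega)]
      have := hrec (j : ℕ)
      linarith

noncomputable def Pm (m : ℕ) : Matrix (Fin m) (Fin m) ℝ :=
  Matrix.of fun j h => sin (((j : ℕ) + 1) * ang m h)

lemma ang_pos (m : ℕ) (h : Fin m) : 0 < ang m h := by
  have : 0 < m := h.pos
  unfold ang
  positivity

lemma ang_lt_pi (m : ℕ) (h : Fin m) : ang m h < π := by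
  have hm : 0 < m := h.pos
  have hlt : (h : ℕ) < m := h.isLt
  have hr : ((h : ℕ) : ℝ) + 1 ≤ (m : ℝ) := by exact_mod_cast hlt
  unfold ang
  rw [div_lt_iff₀ (by positivity)]
  nlinarith [pi_pos]

lemma ang_injective (m : ℕ) : Function.Injective (fun h : Fin m => -2 * cos (ang m h)) := by
  intro a b hab
  have h1 : cos (ang m a) = cos (ang m b) := by
    field_simp at hab; linarith
  have h2 : ang m a = ang m b :=
    injOn_cos ⟨(ang_pos m a).le, (ang_lt_pi m a).le⟩ ⟨(ang_pos m b).le, (ang_lt_pi m b).le⟩ h1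
  have hm : 0 < m := a.pos
  have hm' : (m : ℝ) ≠ 0 := by positivity
  unfold ang at h2
  field_simp at h2
  exact Fin.ext (by exact_mod_cast (by linarith : ((a : ℕ) : ℝ) = ((b : ℕ) : ℝ)))

lemma tM_mul_Pm (m : ℕ) (hm : 1 ≤ m) :
    tM m * Pm m = Pm m * Matrix.diagonal (fun h => -2 * cos (ang m h)) := by
  ext j h
  have h1 := congrFun (tM_mulVec m hm h) j
  simp only [Matrix.mulVec, dotProduct, Pi.smul_apply, smul_eq_mul] at h1
  rw [Matrix.mul_apply, Matrix.mul_diagonal]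
  simp only [Pm, Matrix.of_apply]
  rw [h1]; ring

lemma isUnit_Pm_det (m : ℕ) (hm : 1 ≤ m) : IsUnit (Pm m).det := by
  rw [← Matrix.isUnit_iff_isUnit_det, ← Matrix.linearIndependent_cols_iff_isUnit]
  have := Module.End.eigenvectors_linearIndependent' (Matrix.mulVecLin (tM m))
    (fun h : Fin m => -2 * cos (ang m h)) (ang_injective m)
    (fun h => fun j : Fin m => sin (((j : ℕ) + 1) * ang m h)) ?_
  · exact this
  · intro h
    constructor
    · rw [Module.End.mem_eigenspace_iff, Matrix.mulVecLin_apply]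
      exact tM_mulVec m hm h
    · intro hzero
      have h0 := congrFun hzero ⟨0, hm⟩
      have hpos : 0 < sin (ang m h) := sin_pos_of_pos_of_lt_pi (ang_pos m h) (ang_lt_pi m h)
      simp only [Pi.zero_apply] at h0
      norm_num at h0
      linarith [hpos, h0.symm.le]

lemma matA'_eq (n : ℕ) : matA' n = (4 : ℝ) • 1 + tM n := by
  ext h k
  have hh := h.isLt
  have hk := k.isLt
  have habs : (|(h : ℤ) - (k : ℤ)| = 1) ↔ ((h : ℕ) = (k : ℕ) + 1 ∨ (k : ℕ) = (h : ℕ) + 1) := by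
    rw [abs_eq (by norm_num : (0 : ℤ) ≤ 1)]
    omega
  simp only [matA', tM, Matrix.of_apply, Matrix.add_apply, Matrix.smul_apply, Matrix.one_apply,
    smul_eq_mul, Fin.ext_iff, habs]
  split_ifs <;> (try norm_num) <;> omega

lemma matD''_eq (m n : ℕ) :
    matD'' m n = Matrix.kroneckerMap (· * ·) (1 : Matrix (Fin m) (Fin m) ℝ) (matA' n)
      + Matrix.kroneckerMap (· * ·) (tM m) (1 : Matrix (Fin n) (Fin n) ℝ) := by
  ext p q
  rcases p with ⟨a, b⟩
  rcases q with ⟨c, d⟩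
  have ha := a.isLt
  have hc := c.isLt
  have hb := b.isLt
  have hd := d.isLt
  have habs : (|(b : ℤ) - (d : ℤ)| = 1) ↔ ((b : ℕ) = (d : ℕ) + 1 ∨ (d : ℕ) = (b : ℕ) + 1) := by
    rw [abs_eq (by norm_num : (0 : ℤ) ≤ 1)]
    omega
  simp only [matD'', matA', tM, Matrix.add_apply, Matrix.kroneckerMap_apply, Matrix.of_apply,
    Matrix.one_apply, Matrix.smul_apply, Matrix.neg_apply, smul_eq_mul, Fin.ext_iff,
    apply_ite (fun M : Matrix (Fin n) (Fin n) ℝ => M b d), habs]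
  split_ifs <;> (try norm_num) <;> omega

lemma det_matD'' (m n : ℕ) (hm : 1 ≤ m) (hn : 1 ≤ n) :
    (matD'' m n).det = ∏ h : Fin m, ∏ k : Fin n,
      (4 + (-2 * cos (ang m h)) + (-2 * cos (ang n k))) := by
  set U : Matrix (Fin m × Fin n) (Fin m × Fin n) ℝ := Pm m ⊗ₖ Pm n with hU
  set dg : Fin m × Fin n → ℝ :=
    fun p => 4 + (-2 * cos (ang m p.1)) + (-2 * cos (ang n p.2)) with hdg
  have h1 : (4 : ℝ) • Pm n + Pm n * Matrix.diagonal (fun h => -2 * cos (ang n h))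
      = Pm n * Matrix.diagonal (fun h => 4 + (-2 * cos (ang n h))) := by
    ext i j
    simp only [Matrix.add_apply, Matrix.smul_apply, Matrix.mul_diagonal, smul_eq_mul]
    ring
  have key : matD'' m n * U = U * Matrix.diagonal dg := by
    rw [matD''_eq, matA'_eq, hU]
    rw [add_mul, ← Matrix.mul_kronecker_mul, ← Matrix.mul_kronecker_mul]
    simp only [Matrix.add_mul, Matrix.smul_mul, Matrix.one_mul]
    rw [tM_mul_Pm n hn, tM_mul_Pm m hm, h1]
    rw [show (Pm m ⊗ₖ (Pm n * Matrix.diagonal fun h => 4 + -2 * cos (ang n h)))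
        = (Pm m * 1) ⊗ₖ (Pm n * Matrix.diagonal fun h => 4 + -2 * cos (ang n h)) by
      rw [Matrix.mul_one]]
    rw [show ((Pm m * Matrix.diagonal fun h => -2 * cos (ang m h)) ⊗ₖ Pm n)
        = (Pm m * Matrix.diagonal fun h => -2 * cos (ang m h)) ⊗ₖ (Pm n * 1) by
      rw [Matrix.mul_one]]
    rw [Matrix.mul_kronecker_mul, Matrix.mul_kronecker_mul, ← Matrix.mul_add]
    congr 1
    rw [show (1 : Matrix (Fin m) (Fin m) ℝ) = Matrix.diagonal (fun _ => (1:ℝ)) from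
        Matrix.diagonal_one.symm,
      show (1 : Matrix (Fin n) (Fin n) ℝ) = Matrix.diagonal (fun _ => (1:ℝ)) from
        Matrix.diagonal_one.symm,
      Matrix.diagonal_kronecker_diagonal, Matrix.diagonal_kronecker_diagonal]
    ext p q
    by_cases hpq : p = q
    · subst hpq
      simp [Matrix.diagonal_apply_eq, hdg]
      ring
    · simp [Matrix.diagonal_apply_ne _ hpq]
  have hdetU : IsUnit U.det := by
    rw [hU, Matrix.det_kronecker]
    exact ((isUnit_Pm_det m hm).pow _).mul ((isUnit_Pm_det n hn).pow _)
  have := congrArg Matrix.det key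
  rw [Matrix.det_mul, Matrix.det_mul, Matrix.det_diagonal] at this
  have h2 : (matD'' m n).det = ∏ p : Fin m × Fin n, dg p := by
    have h3 := this
    rw [mul_comm U.det] at h3
    exact mul_right_cancel₀ hdetU.ne_zero h3
  rw [h2, Fintype.prod_prod_type]

lemma prod_reindex (M : ℕ) (hM : 1 ≤ M) (f : ℕ → ℝ) :
    ∏ h ∈ Finset.Icc 1 M, f h = ∏ x : Fin M, f (M - (x : ℕ)) := by
  refine Finset.prod_nbij' (fun a : ℕ => (⟨(M - a) % M, Nat.mod_lt _ (by omega)⟩ : Fin M))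
    (fun x : Fin M => M - (x : ℕ)) (fun a _ => Finset.mem_univ _) ?_ ?_ ?_ ?_
  · intro x _
    have := x.isLt
    simp only [Finset.mem_Icc]
    omega
  · intro a ha
    simp only [Finset.mem_Icc] at ha
    have h1 : M - a < M := by omega
    simp only [Nat.mod_eq_of_lt h1]
    omega
  · intro x _
    have := x.isLt
    apply Fin.ext
    simp only [Fin.val_mk]
    have h1 : M - (M - (x : ℕ)) = (x : ℕ) := by omega
    rw [h1, Nat.mod_eq_of_lt this]
  · intro a ha
    simp only [Finset.mem_Icc] at ha
    have h1 : M - a < M := by omega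
    simp only [Fin.val_mk, Nat.mod_eq_of_lt h1]
    congr 1
    omega

lemma cos_sq_reflect (M : ℕ) (i : ℕ) (hi : i < M) :
    4 * cos ((2 * ((M - i : ℕ) : ℝ) - 1) * π / (4 * M)) ^ 2
      = 2 - 2 * cos ((2 * i + 1) * π / (2 * M)) := by
  have hMpos : 0 < M := by omega
  have hM0 : (M : ℝ) ≠ 0 := by exact_mod_cast hMpos.ne'
  have hcast : ((M - i : ℕ) : ℝ) = (M : ℝ) - i := by
    rw [Nat.cast_sub hi.le]
  have harg : 2 * ((2 * ((M - i : ℕ) : ℝ) - 1) * π / (4 * M))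
      = π - (2 * i + 1) * π / (2 * M) := by
    rw [hcast]; field_simp; ring
  rw [Real.cos_sq, harg, cos_pi_sub]
  ring

theorem det_matD''_eq_double_product (m n : ℕ) (hm : 1 ≤ m) (hn : 1 ≤ n) :
    (matD'' m n).det =
      ∏ h ∈ Finset.Icc 1 m, ∏ k ∈ Finset.Icc 1 n,
        (4 * Real.cos ((2 * h - 1) * π / (4 * m)) ^ 2 +
         4 * Real.cos ((2 * k - 1) * π / (4 * n)) ^ 2) := by
  rw [det_matD'' m n hm hn,
    prod_reindex m hm (fun h => ∏ k ∈ Finset.Icc 1 n,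
      (4 * Real.cos ((2 * (h : ℝ) - 1) * π / (4 * m)) ^ 2 +
       4 * Real.cos ((2 * (k : ℝ) - 1) * π / (4 * n)) ^ 2))]
  refine Finset.prod_congr rfl fun x _ => ?_
  rw [prod_reindex n hn]
  refine Finset.prod_congr rfl fun y _ => ?_
  rw [cos_sq_reflect m (x : ℕ) x.isLt, cos_sq_reflect n (y : ℕ) y.isLt]
  unfold ang
  ring
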